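/- Fix κ ≥ 0 and let A ∈ C²(ℝ, M²) be a solution of the initial value problem Ä + κA = Λ(A,Ȧ)·cof A with data in D such that the function t ↦ |A(t)| is nonconstant and T-periodic for some T > 0; set Xᵢ = Xᵢ(A(0),Ȧ(0)). Define ω₁ = (1/T)∫₀ᵀ X₃/(½|A(t)|²+1) dt, and ω₂ = 0 if X₂ = 0 while ω₂ = (1/T)∫₀ᵀ X₂/(½|A(t)|²−1) dt if X₂ ≠ 0. Then there is a 2T-periodic function Â : ℝ → M² such that A(t) = U(½(ω₁+ω₂)t)·Â(t)·U(½(ω₁−ω₂)t) for all t ∈ ℝ; moreover Â is T-periodic if A(t) ∉ SO(2,ℝ) for all t ∈ ℝ. -/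

import Mathlib

open Matrix

noncomputable section

/-- `M²`: the space of 2×2 real matrices. -/
abbrev M2 : Type := Matrix (Fin 2) (Fin 2) ℝ

/-- Frobenius inner product `⟨A,B⟩ = tr(AᵀB)`. -/
def mip (A B : M2) : ℝ := (Aᵀ * B).trace

/-- Frobenius norm `|A| = ⟨A,A⟩^{1/2}`. -/
def fnorm (A : M2) : ℝ := Real.sqrt (mip A A)

/-- The matrix Z = [[0,−1],[1,0]]. -/
def Zm : M2 := !![0, -1; 1, 0]

/-- The matrix K = [[1,0],[0,−1]]. -/
def Km : M2 := !![1, 0; 0, -1]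

/-- The matrix M = [[0,1],[1,0]]. -/
def Mm : M2 := !![0, 1; 1, 0]

/-- Cofactor: cof [[a,b],[c,d]] = [[d,−c],[−b,a]]. -/
def cofm (A : M2) : M2 := !![A 1 1, -(A 1 0); -(A 0 1), A 0 0]

/-- Membership in SO(2,ℝ). -/
def isSO (U : M2) : Prop := U.det = 1 ∧ U⁻¹ = Uᵀ

/-- The rotation U(θ) = cos θ·I + sin θ·Z. -/
def Um (θ : ℝ) : M2 := Real.cos θ • (1 : M2) + Real.sin θ • Zm

/-- Invariant X₁(A,B) = ½|B|² + (κ/2)|A|². -/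
def X1 (κ : ℝ) (A B : M2) : ℝ := (1/2) * mip B B + (κ/2) * mip A A

/-- Invariant X₂(A,B) = ½⟨ZA − AZ, B⟩. -/
def X2 (A B : M2) : ℝ := (1/2) * mip (Zm * A - A * Zm) B

/-- Invariant X₃(A,B) = ½⟨ZA + AZ, B⟩. -/
def X3 (A B : M2) : ℝ := (1/2) * mip (Zm * A + A * Zm) B

/-- Lagrange multiplier Λ(A,B) = 2(κ − det B)/|A|². -/
def Lam (κ : ℝ) (A B : M2) : ℝ := 2 * (κ - B.det) / (mip A A)

attribute [local instance] Matrix.normedAddCommGroup Matrix.normedSpace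


section Helpers
open Set Complex intervalIntegral MeasureTheory



lemma gron_zero_right {E : Type*} [NormedAddCommGroup E] [NormedSpace ℝ E]
    {f f' : ℝ → E} {K a b : ℝ}
    (hd : ∀ t ∈ Set.Icc a b, HasDerivAt f (f' t) t)
    (hb : ∀ t ∈ Set.Icc a b, ‖f' t‖ ≤ K * ‖f t‖)
    (h0 : f a = 0) : ∀ t ∈ Set.Icc a b, f t = 0 := by
  intro t ht
  have hcont : ContinuousOn f (Icc a b) :=
    fun s hs => ((hd s hs).continuousAt).continuousWithinAt
  have := norm_le_gronwallBound_of_norm_deriv_right_le (f' := f') (δ := 0) (K := K) (ε := 0)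
    hcont (fun s hs => (hd s (Set.mem_Icc.2 ⟨hs.1, le_of_lt hs.2⟩)).hasDerivWithinAt)
    (by simp [h0]) (fun s hs => by
      simpa using hb s (Set.mem_Icc.2 ⟨hs.1, le_of_lt hs.2⟩)) t ht
  rw [gronwallBound_ε0_δ0] at this
  simpa using norm_le_zero_iff.mp (le_trans this le_rfl)

lemma gron_zero_Icc {E : Type*} [NormedAddCommGroup E] [NormedSpace ℝ E]
    {f f' : ℝ → E} {K a b t₀ : ℝ} (ht₀ : t₀ ∈ Set.Icc a b)
    (hd : ∀ t ∈ Set.Icc a b, HasDerivAt f (f' t) t)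
    (hb : ∀ t ∈ Set.Icc a b, ‖f' t‖ ≤ K * ‖f t‖)
    (h0 : f t₀ = 0) : ∀ t ∈ Set.Icc a b, f t = 0 := by
  intro t ht
  rcases le_total t₀ t with h | h
  · exact gron_zero_right (a := t₀) (b := b)
      (fun s hs => hd s ⟨le_trans ht₀.1 hs.1, hs.2⟩)
      (fun s hs => hb s ⟨le_trans ht₀.1 hs.1, hs.2⟩) h0 t ⟨h, ht.2⟩
  · -- reflect
    have key : ∀ s ∈ Set.Icc (-t₀) (-a), f (-s) = 0 := by
      apply gron_zero_right (f := fun s => f (-s)) (f' := fun s => (-1 : ℝ) • f' (-s)) (K := K)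
      · intro s hs
        have : -s ∈ Set.Icc a b := ⟨le_neg.mp hs.2, by
          have := hs.1; have : -t₀ ≤ s := this; linarith [ht₀.2]⟩
        exact ((hd _ this).scomp s (hasDerivAt_neg s))
      · intro s hs
        have hmem : -s ∈ Set.Icc a b := ⟨le_neg.mp hs.2, by
          have : -t₀ ≤ s := hs.1; linarith [ht₀.2]⟩
        simpa using hb _ hmem
      · simpa using h0
    have := key (-t) ⟨by linarith, by have := ht.1; linarith⟩
    simpa using this


lemma pair_ode_zero {p q P Q : ℝ → ℝ} {K a b t₀ : ℝ}
    (ht₀ : t₀ ∈ Set.Icc a b)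
    (hdp : ∀ t ∈ Set.Icc a b, HasDerivAt p (P t) t)
    (hdq : ∀ t ∈ Set.Icc a b, HasDerivAt q (Q t) t)
    (hbP : ∀ t ∈ Set.Icc a b, |P t| ≤ K * max |p t| |q t|)
    (hbQ : ∀ t ∈ Set.Icc a b, |Q t| ≤ K * max |p t| |q t|)
    (hp0 : p t₀ = 0) (hq0 : q t₀ = 0) :
    ∀ t ∈ Set.Icc a b, p t = 0 ∧ q t = 0 := by
  have key := gron_zero_Icc (f := fun t => (p t, q t)) (f' := fun t => (P t, Q t))
    (K := K) ht₀
    (fun t ht => (hdp t ht).prodMk (hdq t ht))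
    (fun t ht => by
      rw [Prod.norm_def, Prod.norm_def]
      simp only [Real.norm_eq_abs]
      exact max_le (hbP t ht) (hbQ t ht))
    (by simp [hp0, hq0, Prod.ext_iff])
  intro t ht
  have := key t ht
  exact ⟨congrArg Prod.fst this, congrArg Prod.snd this⟩

lemma second_order_zero {u u' c : ℝ → ℝ} {K : ℝ}
    (hbd : ∀ t, |c t| ≤ K)
    (hd : ∀ t, HasDerivAt u (u' t) t) (hd' : ∀ t, HasDerivAt u' (c t * u t) t)
    {t₀ : ℝ} (h0 : u t₀ = 0) (h0' : u' t₀ = 0) : ∀ t, u t = 0 := by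
  have hK0 : 0 ≤ K := le_trans (abs_nonneg _) (hbd 0)
  intro t
  have hmem : t₀ ∈ Set.Icc (min t t₀) (max t t₀) :=
    ⟨min_le_right _ _, le_max_right _ _⟩
  have := pair_ode_zero (K := 1 + K) hmem
    (fun s _ => hd s) (fun s _ => hd' s)
    (fun s _ => by
      have h1 : |u' s| ≤ max |u s| |u' s| := le_max_right _ _
      nlinarith [le_max_left |u s| |u' s|, abs_nonneg (u s), abs_nonneg (u' s)])
    (fun s _ => by
      have h1 : |c s * u s| ≤ K * |u s| := by
        rw [abs_mul]
        exact mul_le_mul_of_nonneg_right (hbd s) (abs_nonneg _)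
      have h2 : |u s| ≤ max |u s| |u' s| := le_max_left _ _
      nlinarith [abs_nonneg (u' s), le_max_right |u s| |u' s|, abs_nonneg (u s)])
    h0 h0' t ⟨min_le_left _ _, le_max_left _ _⟩
  exact this.1


lemma conj_mul_re_symm (a b : ℂ) :
    ((starRingEnd ℂ) a * b).re = ((starRingEnd ℂ) b * a).re := by
  simp [Complex.mul_re, Complex.conj_re, Complex.conj_im]; ring

lemma phase_shift {z z' : ℝ → ℂ} {T L : ℝ} (hT : 0 < T)
    (hd : ∀ t, HasDerivAt z (z' t) t) (hc : Continuous z')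
    (hnz : ∀ t, z t ≠ 0)
    (hNper : Function.Periodic (fun t => Complex.normSq (z t)) T)
    (hL : ∀ t, ((starRingEnd ℂ) (z t) * z' t).im = L) :
    ∀ t, z (t + T) =
      Complex.exp ((∫ s in (0:ℝ)..T, L / Complex.normSq (z s)) * Complex.I) * z t := by
  have hzc : Continuous z := by
    have : Differentiable ℝ z := fun t => (hd t).differentiableAt
    exact this.continuous
  set N : ℝ → ℝ := fun t => Complex.normSq (z t) with hNdef
  have hN0 : ∀ t, N t ≠ 0 := fun t => (Complex.normSq_pos.2 (hnz t)).ne'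
  have hNc : Continuous N := Complex.continuous_normSq.comp hzc
  have hconjz : ∀ t, (starRingEnd ℂ) (z t) * z t = (N t : ℂ) := by
    intro t; rw [mul_comm, Complex.mul_conj]
  have hdconj : ∀ t, HasDerivAt (fun s => (starRingEnd ℂ) (z s)) ((starRingEnd ℂ) (z' t)) t :=
    fun t => (hd t).star
  have hdN : ∀ t, HasDerivAt N (2 * ((starRingEnd ℂ) (z t) * z' t).re) t := by
    intro t
    have hmul : HasDerivAt (fun s => (starRingEnd ℂ) (z s) * z s)
        ((starRingEnd ℂ) (z' t) * z t + (starRingEnd ℂ) (z t) * z' t) t :=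
      (hdconj t).mul (hd t)
    have hre := Complex.reCLM.hasFDerivAt.comp_hasDerivAt t hmul
    have heq : N = fun s => Complex.reCLM ((starRingEnd ℂ) (z s) * z s) := by
      funext s
      have := hconjz s
      simp only [Complex.reCLM_apply, this, Complex.ofReal_re]
    rw [heq]
    refine hre.congr_deriv (Eq.symm ?_)
    simp only [Complex.reCLM_apply, Function.comp, Complex.add_re]
    rw [conj_mul_re_symm (z' t) (z t)]
    ring
  set w : ℝ → ℂ := fun t => z' t / z t with hwdef
  have hw_eq : ∀ t, w t = ((starRingEnd ℂ) (z t) * z' t) / (N t : ℂ) := by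
    intro t
    rw [hwdef]
    rw [div_eq_div_iff (hnz t) (by exact_mod_cast hN0 t)]
    rw [← hconjz t]; ring
  have hw_re : ∀ t, (w t).re = ((starRingEnd ℂ) (z t) * z' t).re / N t := by
    intro t; rw [hw_eq t, Complex.div_ofReal_re]
  have hw_im : ∀ t, (w t).im = L / N t := by
    intro t; rw [hw_eq t, Complex.div_ofReal_im, hL t]
  have hwc : Continuous w := hc.div hzc hnz
  have hre_per : ∀ t, ((starRingEnd ℂ) (z (t + T)) * z' (t + T)).re
      = ((starRingEnd ℂ) (z t) * z' t).re := by
    intro t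
    have h1 : HasDerivAt (fun s => N (s + T)) (2 * ((starRingEnd ℂ) (z (t + T)) * z' (t + T)).re) t :=
      HasDerivAt.comp_add_const t T (hdN (t + T))
    have h2 : (fun s => N (s + T)) = N := funext fun s => hNper s
    rw [h2] at h1
    have := h1.unique (hdN t)
    linarith
  have hwper : Function.Periodic w T := by
    intro t
    apply Complex.ext
    · rw [hw_re, hw_re, hre_per t, hNper t]
    · rw [hw_im, hw_im, hNper t]
  have hF : ∀ t, HasDerivAt (fun u => ∫ s in (0:ℝ)..u, w s) (w t) t :=
    fun t => (hwc.integral_hasStrictDerivAt 0 t).hasDerivAt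
  have hzexp : ∀ t, z t = z 0 * Complex.exp (∫ s in (0:ℝ)..t, w s) := by
    intro t
    set G : ℝ → ℂ := fun u => z u * Complex.exp (-∫ s in (0:ℝ)..u, w s) with hGdef
    have hdG : ∀ u, HasDerivAt G 0 u := by
      intro u
      have h1 : HasDerivAt (fun v => Complex.exp (-∫ s in (0:ℝ)..v, w s))
          (-w u * Complex.exp (-∫ s in (0:ℝ)..u, w s)) u := by
        have := ((hF u).neg).cexp
        refine this.congr_deriv (Eq.symm ?_)
        simp only [Pi.neg_apply]; ring
      have hthis := (hd u).mul h1
      have key : z u * (-w u * Complex.exp (-∫ s in (0:ℝ)..u, w s))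
          = -(z' u * Complex.exp (-∫ s in (0:ℝ)..u, w s)) := by
        have h2 : z' u / z u * z u = z' u := div_mul_cancel₀ _ (hnz u)
        calc z u * (-w u * Complex.exp (-∫ s in (0:ℝ)..u, w s))
            = -((z' u / z u * z u) * Complex.exp (-∫ s in (0:ℝ)..u, w s)) := by
              rw [hwdef]; ring
          _ = -(z' u * Complex.exp (-∫ s in (0:ℝ)..u, w s)) := by rw [h2]
      rw [key] at hthis
      simp at hthis; exact hthis
    have hGconst : G t = G 0 := by
      have hdiff : Differentiable ℝ G := fun u => (hdG u).differentiableAt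
      have hzero : ∀ u, deriv G u = 0 := fun u => (hdG u).deriv
      exact is_const_of_deriv_eq_zero hdiff hzero t 0
    have hG0 : G 0 = z 0 := by
      simp [hGdef, intervalIntegral.integral_same]
    rw [hG0] at hGconst
    have := congrArg (fun x => x * Complex.exp (∫ s in (0:ℝ)..t, w s)) hGconst
    simpa [hGdef, mul_assoc, ← Complex.exp_add] using this
  have hint : ∀ a b : ℝ, IntervalIntegrable w volume a b :=
    fun a b => hwc.intervalIntegrable a b
  have hshift : ∀ t, z (t + T) = z t * Complex.exp (∫ s in (0:ℝ)..T, w s) := by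
    intro t
    rw [hzexp (t + T), hzexp t]
    have hsplit : (∫ s in (0:ℝ)..(t+T), w s)
        = (∫ s in (0:ℝ)..t, w s) + ∫ s in t..(t+T), w s :=
      (intervalIntegral.integral_add_adjacent_intervals (hint 0 t) (hint t (t+T))).symm
    have hper' : (∫ s in t..(t+T), w s) = ∫ s in (0:ℝ)..T, w s := by
      have := hwper.intervalIntegral_add_eq t 0
      simpa using this
    rw [hsplit, hper', Complex.exp_add]
    ring
  have hre_cont : Continuous fun t => (w t).re := Complex.continuous_re.comp hwc
  have h0T : (0:ℝ) ≤ T := hT.le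
  have hre_zero : (∫ s in (0:ℝ)..T, (w s).re) = 0 := by
    have hφ : ∀ u, HasDerivAt (fun s => Real.log (N s) / 2) ((w u).re) u := by
      intro u
      have h1 : HasDerivAt (fun s => Real.log (N s))
          ((N u)⁻¹ * (2 * ((starRingEnd ℂ) (z u) * z' u).re)) u :=
        (Real.hasDerivAt_log (hN0 u)).comp u (hdN u)
      have := h1.div_const 2
      refine this.congr_deriv (Eq.symm ?_)
      rw [hw_re u]
      field_simp
    have hFTC := intervalIntegral.integral_eq_sub_of_hasDerivAt
      (f := fun s => Real.log (N s) / 2) (fun u _ => hφ u) (hre_cont.intervalIntegrable 0 T)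
    rw [hFTC]
    have hNT : Complex.normSq (z T) = Complex.normSq (z 0) := by simpa using hNper 0
    simp only [hNdef]
    rw [hNT]; ring
  have him_eq : (∫ s in (0:ℝ)..T, (w s).im) = ∫ s in (0:ℝ)..T, L / Complex.normSq (z s) := by
    apply intervalIntegral.integral_congr
    intro s _
    simpa using hw_im s
  have hIw : MeasureTheory.IntegrableOn w (Set.Ioc (0:ℝ) T) volume :=
    hwc.integrableOn_Ioc
  have hre' : (∫ s in (0:ℝ)..T, w s).re = ∫ s in (0:ℝ)..T, (w s).re := by
    rw [intervalIntegral.integral_of_le h0T, intervalIntegral.integral_of_le h0T]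
    have := integral_re (μ := volume.restrict (Set.Ioc (0:ℝ) T)) (f := w) hIw
    simpa using this.symm
  have him' : (∫ s in (0:ℝ)..T, w s).im = ∫ s in (0:ℝ)..T, (w s).im := by
    rw [intervalIntegral.integral_of_le h0T, intervalIntegral.integral_of_le h0T]
    have := integral_im (μ := volume.restrict (Set.Ioc (0:ℝ) T)) (f := w) hIw
    simpa using this.symm
  have hJ : (∫ s in (0:ℝ)..T, w s)
      = ((∫ s in (0:ℝ)..T, L / Complex.normSq (z s) : ℝ) : ℂ) * Complex.I := by
    apply Complex.ext
    · simp [hre', hre_zero]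
    · simp [him', him_eq]
  intro t
  rw [hshift t, hJ]
  ring


lemma hasDerivAt_re {f : ℝ → ℂ} {f' : ℂ} {t : ℝ} (h : HasDerivAt f f' t) :
    HasDerivAt (fun s => (f s).re) f'.re t := by
  exact (Complex.reCLM.hasFDerivAt.comp_hasDerivAt t h)

lemma hasDerivAt_im {f : ℝ → ℂ} {f' : ℂ} {t : ℝ} (h : HasDerivAt f f' t) :
    HasDerivAt (fun s => (f s).im) f'.im t := by
  exact (Complex.imCLM.hasFDerivAt.comp_hasDerivAt t h)

lemma hasDerivAt_conj_mul {z w : ℝ → ℂ} {zt' wt' : ℂ} {t : ℝ}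
    (hz : HasDerivAt z zt' t) (hw : HasDerivAt w wt' t) :
    HasDerivAt (fun s => (starRingEnd ℂ) (z s) * w s)
      ((starRingEnd ℂ) zt' * w t + (starRingEnd ℂ) (z t) * wt') t :=
  (hz.star).mul hw

lemma hasDerivAt_normSq {z : ℝ → ℂ} {zt' : ℂ} {t : ℝ} (h : HasDerivAt z zt' t) :
    HasDerivAt (fun s => Complex.normSq (z s)) (2 * ((starRingEnd ℂ) (z t) * zt').re) t := by
  have hre := hasDerivAt_re (hasDerivAt_conj_mul h h)
  have heq : (fun s => Complex.normSq (z s)) = fun s => ((starRingEnd ℂ) (z s) * z s).re := by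
    funext s
    rw [mul_comm, Complex.mul_conj, Complex.ofReal_re]
  rw [heq]
  convert hre using 1
  rw [Complex.add_re, conj_mul_re_symm zt' (z t)]
  ring

/-- first complex coordinate -/
def c1 (A : M2) : ℂ := ⟨(A 0 0 + A 1 1)/2, (A 1 0 - A 0 1)/2⟩
/-- second complex coordinate -/
def c2 (A : M2) : ℂ := ⟨(A 0 0 - A 1 1)/2, (A 0 1 + A 1 0)/2⟩

lemma c1_re (A : M2) : (c1 A).re = (A 0 0 + A 1 1)/2 := rfl
lemma c1_im (A : M2) : (c1 A).im = (A 1 0 - A 0 1)/2 := rfl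
lemma c2_re (A : M2) : (c2 A).re = (A 0 0 - A 1 1)/2 := rfl
lemma c2_im (A : M2) : (c2 A).im = (A 0 1 + A 1 0)/2 := rfl

lemma ext_c {A B : M2} (h1 : c1 A = c1 B) (h2 : c2 A = c2 B) : A = B := by
  have e1 := congrArg Complex.re h1
  have e2 := congrArg Complex.im h1
  have e3 := congrArg Complex.re h2
  have e4 := congrArg Complex.im h2
  simp only [c1_re, c1_im, c2_re, c2_im] at e1 e2 e3 e4
  ext i j
  fin_cases i <;> fin_cases j <;> simp <;> linarith

lemma mip_eq (A B : M2) :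
    mip A B = A 0 0 * B 0 0 + A 0 1 * B 0 1 + A 1 0 * B 1 0 + A 1 1 * B 1 1 := by
  simp [mip, Matrix.trace_fin_two, Matrix.mul_apply, Fin.sum_univ_two, Matrix.transpose_apply]
  ring

lemma mip_c (A B : M2) :
    mip A B = 2 * (((starRingEnd ℂ) (c1 A) * c1 B).re + ((starRingEnd ℂ) (c2 A) * c2 B).re) := by
  simp [mip_eq, Complex.mul_re, c1_re, c1_im, c2_re, c2_im, Complex.conj_re, Complex.conj_im]
  ring

lemma det_c (A : M2) : A.det = Complex.normSq (c1 A) - Complex.normSq (c2 A) := by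
  rw [Matrix.det_fin_two]
  simp [Complex.normSq_apply, c1_re, c1_im, c2_re, c2_im]
  ring

lemma mip_self_c (A : M2) :
    mip A A = 2 * (Complex.normSq (c1 A) + Complex.normSq (c2 A)) := by
  simp [mip_eq, Complex.normSq_apply, c1_re, c1_im, c2_re, c2_im]
  ring

lemma c1_cof (A : M2) : c1 (cofm A) = c1 A := by
  apply Complex.ext <;> simp [c1_re, c1_im, cofm] <;> ring

lemma c2_cof (A : M2) : c2 (cofm A) = - c2 A := by
  apply Complex.ext <;> simp [c2_re, c2_im, cofm] <;> ring

lemma c1_Zmul (A : M2) : c1 (Zm * A) = I * c1 A := by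
  rw [Matrix.eta_fin_two A]
  apply Complex.ext <;>
    simp [c1_re, c1_im, Zm, Matrix.mul_fin_two, Complex.mul_re, Complex.mul_im] <;> ring

lemma c2_Zmul (A : M2) : c2 (Zm * A) = I * c2 A := by
  rw [Matrix.eta_fin_two A]
  apply Complex.ext <;>
    simp [c2_re, c2_im, Zm, Matrix.mul_fin_two, Complex.mul_re, Complex.mul_im] <;> ring

lemma c1_mulZ (A : M2) : c1 (A * Zm) = I * c1 A := by
  rw [Matrix.eta_fin_two A]
  apply Complex.ext <;>
    simp [c1_re, c1_im, Zm, Matrix.mul_fin_two, Complex.mul_re, Complex.mul_im] <;> ring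

lemma c2_mulZ (A : M2) : c2 (A * Zm) = -(I * c2 A) := by
  rw [Matrix.eta_fin_two A]
  apply Complex.ext <;>
    simp [c2_re, c2_im, Zm, Matrix.mul_fin_two, Complex.mul_re, Complex.mul_im] <;> ring

lemma c1_add (A B : M2) : c1 (A + B) = c1 A + c1 B := by
  apply Complex.ext <;> simp [c1_re, c1_im, Matrix.add_apply] <;> ring
lemma c2_add (A B : M2) : c2 (A + B) = c2 A + c2 B := by
  apply Complex.ext <;> simp [c2_re, c2_im, Matrix.add_apply] <;> ring
lemma c1_smul (r : ℝ) (A : M2) : c1 (r • A) = (r : ℂ) * c1 A := by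
  apply Complex.ext <;> simp [c1_re, c1_im, Matrix.smul_apply, Complex.mul_re, Complex.mul_im] <;> ring
lemma c2_smul (r : ℝ) (A : M2) : c2 (r • A) = (r : ℂ) * c2 A := by
  apply Complex.ext <;> simp [c2_re, c2_im, Matrix.smul_apply, Complex.mul_re, Complex.mul_im] <;> ring

lemma c1_Um_mul (θ : ℝ) (A : M2) : c1 (Um θ * A) = Complex.exp (θ * I) * c1 A := by
  have : Um θ * A = Real.cos θ • A + Real.sin θ • (Zm * A) := by
    simp [Um, add_mul, Matrix.smul_mul]
  rw [this, c1_add, c1_smul, c1_smul, c1_Zmul, Complex.exp_mul_I]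
  push_cast
  ring

lemma c2_Um_mul (θ : ℝ) (A : M2) : c2 (Um θ * A) = Complex.exp (θ * I) * c2 A := by
  have : Um θ * A = Real.cos θ • A + Real.sin θ • (Zm * A) := by
    simp [Um, add_mul, Matrix.smul_mul]
  rw [this, c2_add, c2_smul, c2_smul, c2_Zmul, Complex.exp_mul_I]
  push_cast; ring

lemma c1_mul_Um (θ : ℝ) (A : M2) : c1 (A * Um θ) = Complex.exp (θ * I) * c1 A := by
  have : A * Um θ = Real.cos θ • A + Real.sin θ • (A * Zm) := by
    simp [Um, mul_add, Matrix.mul_smul]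
  rw [this, c1_add, c1_smul, c1_smul, c1_mulZ, Complex.exp_mul_I]
  push_cast; ring

lemma c2_mul_Um (θ : ℝ) (A : M2) : c2 (A * Um θ) = Complex.exp (-θ * I) * c2 A := by
  have : A * Um θ = Real.cos θ • A + Real.sin θ • (A * Zm) := by
    simp [Um, mul_add, Matrix.mul_smul]
  rw [this, c2_add, c2_smul, c2_smul, c2_mulZ, Complex.exp_mul_I]
  push_cast
  simp [Real.cos_neg, Real.sin_neg]
  ring

lemma Um_zero : Um 0 = 1 := by simp [Um]

lemma c1_Um (θ : ℝ) : c1 (Um θ) = Complex.exp (θ * I) := by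
  rw [Complex.exp_mul_I]
  apply Complex.ext <;>
    simp [c1_re, c1_im, Um, Zm, Matrix.one_apply, Matrix.add_apply, Matrix.smul_apply,
      Complex.cos_ofReal_re, Complex.sin_ofReal_re]

lemma c2_Um (θ : ℝ) : c2 (Um θ) = 0 := by
  apply Complex.ext <;>
    simp [c2_re, c2_im, Um, Zm, Matrix.one_apply, Matrix.add_apply, Matrix.smul_apply]

lemma Um_mul_Um (a b : ℝ) : Um a * Um b = Um (a + b) := by
  apply ext_c
  · rw [c1_Um_mul, c1_Um, c1_Um, ← Complex.exp_add]
    push_cast; ring_nf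
  · rw [c2_Um_mul, c2_Um, c2_Um, mul_zero]

lemma Um_neg_mul (x : ℝ) : Um (-x) * Um x = 1 := by
  rw [Um_mul_Um, neg_add_cancel, Um_zero]

lemma Um_mul_neg (x : ℝ) : Um x * Um (-x) = 1 := by
  rw [Um_mul_Um, add_neg_cancel, Um_zero]


def c1L : M2 →L[ℝ] ℂ :=
  LinearMap.toContinuousLinearMap
    { toFun := c1
      map_add' := c1_add
      map_smul' := fun r A => by simp [c1_smul, Complex.real_smul] }

def c2L : M2 →L[ℝ] ℂ :=
  LinearMap.toContinuousLinearMap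
    { toFun := c2
      map_add' := c2_add
      map_smul' := fun r A => by simp [c2_smul, Complex.real_smul] }

lemma c1L_apply (A : M2) : c1L A = c1 A := rfl
lemma c2L_apply (A : M2) : c2L A = c2 A := rfl

lemma hasDerivAt_c1 {f : ℝ → M2} {f' : M2} {t : ℝ} (hf : HasDerivAt f f' t) :
    HasDerivAt (fun s => c1 (f s)) (c1 f') t := by
  exact (c1L.hasFDerivAt.comp_hasDerivAt t hf :)

lemma hasDerivAt_c2 {f : ℝ → M2} {f' : M2} {t : ℝ} (hf : HasDerivAt f f' t) :
    HasDerivAt (fun s => c2 (f s)) (c2 f') t := by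
  exact (c2L.hasFDerivAt.comp_hasDerivAt t hf :)

lemma continuous_c1 : Continuous c1 := c1L.continuous
lemma continuous_c2 : Continuous c2 := c2L.continuous

lemma conj_two_I_mul_re (z w : ℂ) :
    ((starRingEnd ℂ) (2 * Complex.I * z) * w).re = 2 * ((starRingEnd ℂ) z * w).im := by
  simp [Complex.mul_re, Complex.mul_im, Complex.conj_re, Complex.conj_im]
  ring

lemma X3_c (A B : M2) : X3 A B = 2 * ((starRingEnd ℂ) (c1 A) * c1 B).im := by
  have h1 : c1 (Zm * A + A * Zm) = 2 * Complex.I * c1 A := by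
    rw [c1_add, c1_Zmul, c1_mulZ]; ring
  have h2 : c2 (Zm * A + A * Zm) = 0 := by
    rw [c2_add, c2_Zmul, c2_mulZ]; ring
  rw [X3, mip_c, h1, h2, conj_two_I_mul_re]
  simp

lemma X2_c (A B : M2) : X2 A B = 2 * ((starRingEnd ℂ) (c2 A) * c2 B).im := by
  have h1 : c1 (Zm * A - A * Zm) = 0 := by
    have := c1_add (Zm * A) (-(A * Zm))
    rw [sub_eq_add_neg, c1_add]
    have hneg : c1 (-(A * Zm)) = - c1 (A * Zm) := by
      have := c1_smul (-1 : ℝ) (A * Zm)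
      simpa using this
    rw [hneg, c1_Zmul, c1_mulZ]; ring
  have h2 : c2 (Zm * A - A * Zm) = 2 * Complex.I * c2 A := by
    rw [sub_eq_add_neg, c2_add]
    have hneg : c2 (-(A * Zm)) = - c2 (A * Zm) := by
      have := c2_smul (-1 : ℝ) (A * Zm)
      simpa using this
    rw [hneg, c2_Zmul, c2_mulZ]; ring
  rw [X2, mip_c, h1, h2, conj_two_I_mul_re]
  simp

lemma isSO_of_c2_zero {A : M2} (hd : A.det = 1) (h2 : c2 A = 0) : isSO A := by
  have e1 : A 1 1 = A 0 0 := by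
    have := congrArg Complex.re h2
    simp [c2_re] at this
    linarith
  have e2 : A 0 1 = -(A 1 0) := by
    have := congrArg Complex.im h2
    simp [c2_im] at this
    linarith
  have hdet : A 0 0 * A 0 0 + A 1 0 * A 1 0 = 1 := by
    rw [Matrix.det_fin_two] at hd
    rw [e1, e2] at hd
    linarith [hd]
  refine ⟨hd, ?_⟩
  have hright : A * Aᵀ = 1 := by
    ext i j
    fin_cases i <;> fin_cases j <;>
      simp [Matrix.mul_apply, Fin.sum_univ_two, Matrix.transpose_apply, Matrix.one_apply,
        e1, e2] <;>
      nlinarith [hdet]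
  rw [Matrix.inv_eq_right_inv hright]

end Helpers

set_option maxHeartbeats 4000000 in
/-- quasi-periodic structure of solutions with |A(t)| nonconstant
and T-periodic. -/
theorem quasi_periodic (κ : ℝ) (hκ : 0 ≤ κ) (A₀ B₀ : M2)
    (hdet : A₀.det = 1) (htan : mip B₀ (cofm A₀) = 0)
    (A : ℝ → M2) (hA : ContDiff ℝ 2 A)
    (hA0 : A 0 = A₀) (hB0 : deriv A 0 = B₀)
    (hode : ∀ t : ℝ, deriv (deriv A) t + κ • A t
      = Lam κ (A t) (deriv A t) • cofm (A t))
    (T : ℝ) (hT : 0 < T)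
    (hper : Function.Periodic (fun t => fnorm (A t)) T)
    (hnonconst : ∃ s t : ℝ, fnorm (A s) ≠ fnorm (A t))
    (ω₁ ω₂ : ℝ)
    (hω₁ : ω₁ = (1/T) * ∫ t in (0:ℝ)..T, X3 A₀ B₀ / ((1/2) * mip (A t) (A t) + 1))
    (hω₂0 : X2 A₀ B₀ = 0 → ω₂ = 0)
    (hω₂1 : X2 A₀ B₀ ≠ 0 →
      ω₂ = (1/T) * ∫ t in (0:ℝ)..T, X2 A₀ B₀ / ((1/2) * mip (A t) (A t) - 1)) :
    ∃ Ahat : ℝ → M2, Function.Periodic Ahat (2 * T) ∧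
      (∀ t : ℝ, A t = Um ((ω₁ + ω₂) * t / 2) * Ahat t * Um ((ω₁ - ω₂) * t / 2)) ∧
      ((∀ t : ℝ, ¬ isSO (A t)) → Function.Periodic Ahat T) := by
  classical
  have h2eq : (2 : WithTop ℕ∞) = 1 + 1 := by norm_num
  rw [h2eq] at hA
  obtain ⟨hdiffA, -, hC1⟩ := contDiff_succ_iff_deriv.mp hA
  have h1eq : (1 : WithTop ℕ∞) = 0 + 1 := by norm_num
  rw [h1eq] at hC1
  obtain ⟨hdiffA1, -, hC0⟩ := contDiff_succ_iff_deriv.mp hC1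
  have hcont1 : Continuous (deriv A) := hdiffA1.continuous
  have hcont2 : Continuous (deriv (deriv A)) := hC0.continuous
  have hdA : ∀ t, HasDerivAt A (deriv A t) t := fun t => (hdiffA t).hasDerivAt
  have hdA1 : ∀ t, HasDerivAt (deriv A) (deriv (deriv A) t) t :=
    fun t => (hdiffA1 t).hasDerivAt
  -- coordinate derivatives
  have hdz1 : ∀ t, HasDerivAt (fun s => c1 (A s)) (c1 (deriv A t)) t :=
    fun t => hasDerivAt_c1 (hdA t)
  have hdz2 : ∀ t, HasDerivAt (fun s => c2 (A s)) (c2 (deriv A t)) t :=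
    fun t => hasDerivAt_c2 (hdA t)
  have hdw1 : ∀ t, HasDerivAt (fun s => c1 (deriv A s)) (c1 (deriv (deriv A) t)) t :=
    fun t => hasDerivAt_c1 (hdA1 t)
  have hdw2 : ∀ t, HasDerivAt (fun s => c2 (deriv A s)) (c2 (deriv (deriv A) t)) t :=
    fun t => hasDerivAt_c2 (hdA1 t)
  -- the ODE in coordinates
  have hode1 : ∀ t, c1 (deriv (deriv A) t)
      = ((Lam κ (A t) (deriv A t) : ℂ) - (κ : ℂ)) * c1 (A t) := by
    intro t
    have h0 := congrArg c1 (hode t)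
    rw [c1_add, c1_smul, c1_smul, c1_cof] at h0
    linear_combination h0
  have hode2 : ∀ t, c2 (deriv (deriv A) t)
      = -((Lam κ (A t) (deriv A t) : ℂ) + (κ : ℂ)) * c2 (A t) := by
    intro t
    have h0 := congrArg c2 (hode t)
    rw [c2_add, c2_smul, c2_smul, c2_cof] at h0
    linear_combination h0
  -- conservation of the constraints (clopen argument)
  have hmain : ∀ t, (Complex.normSq (c1 (A t)) - Complex.normSq (c2 (A t)) = 1) ∧
      (((starRingEnd ℂ) (c1 (A t)) * c1 (deriv A t)).re
        - ((starRingEnd ℂ) (c2 (A t)) * c2 (deriv A t)).re = 0) := by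
    set p : ℝ → ℝ :=
      fun t => Complex.normSq (c1 (A t)) - Complex.normSq (c2 (A t)) - 1 with hpdef
    set q : ℝ → ℝ := fun t => ((starRingEnd ℂ) (c1 (A t)) * c1 (deriv A t)).re
        - ((starRingEnd ℂ) (c2 (A t)) * c2 (deriv A t)).re with hqdef
    have hdp : ∀ t, HasDerivAt p (2 * q t) t := by
      intro t
      have h2 := ((hasDerivAt_normSq (hdz1 t)).sub (hasDerivAt_normSq (hdz2 t))).sub_const 1
      refine h2.congr_deriv (Eq.symm ?_)
      rw [hqdef]; ring
    have hdq : ∀ t, 0 < Complex.normSq (c1 (A t)) + Complex.normSq (c2 (A t)) →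
        HasDerivAt q (-κ * p t) t := by
      intro t hpos
      have h1 := hasDerivAt_re ((hasDerivAt_conj_mul (hdz1 t) (hdw1 t)).sub
        (hasDerivAt_conj_mul (hdz2 t) (hdw2 t)))
      refine h1.congr_deriv (Eq.symm ?_)
      rw [hode1 t, hode2 t, hpdef]
      have hLam : Lam κ (A t) (deriv A t)
          * (Complex.normSq (c1 (A t)) + Complex.normSq (c2 (A t)))
          = κ - (deriv A t).det := by
        rw [Lam, mip_self_c]
        field_simp
      have hdB : (deriv A t).det
          = Complex.normSq (c1 (deriv A t)) - Complex.normSq (c2 (deriv A t)) := det_c _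
      have e1 : (starRingEnd ℂ) (c1 (deriv A t)) * c1 (deriv A t)
          = (Complex.normSq (c1 (deriv A t)) : ℂ) := by rw [mul_comm, Complex.mul_conj]
      have e2 : (starRingEnd ℂ) (c2 (deriv A t)) * c2 (deriv A t)
          = (Complex.normSq (c2 (deriv A t)) : ℂ) := by rw [mul_comm, Complex.mul_conj]
      have e3 : (starRingEnd ℂ) (c1 (A t)) * c1 (A t)
          = (Complex.normSq (c1 (A t)) : ℂ) := by rw [mul_comm, Complex.mul_conj]
      have e4 : (starRingEnd ℂ) (c2 (A t)) * c2 (A t)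
          = (Complex.normSq (c2 (A t)) : ℂ) := by rw [mul_comm, Complex.mul_conj]
      have f3 : (starRingEnd ℂ) (c1 (A t))
            * (((Lam κ (A t) (deriv A t) : ℂ) - (κ : ℂ)) * c1 (A t))
          = ((Lam κ (A t) (deriv A t) : ℂ) - (κ : ℂ)) * (Complex.normSq (c1 (A t)) : ℂ) := by
        rw [← e3]; ring
      have f4 : (starRingEnd ℂ) (c2 (A t))
            * (-((Lam κ (A t) (deriv A t) : ℂ) + (κ : ℂ)) * c2 (A t))
          = -((Lam κ (A t) (deriv A t) : ℂ) + (κ : ℂ)) * (Complex.normSq (c2 (A t)) : ℂ) := by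
        rw [← e4]; ring
      rw [Complex.sub_re, Complex.add_re, Complex.add_re, e1, e2, f3, f4]
      push_cast
      simp only [Complex.add_re, Complex.sub_re, Complex.mul_re, Complex.ofReal_re,
        Complex.ofReal_im, Complex.sub_im, Complex.add_im, Complex.neg_re, Complex.neg_im]
      ring_nf
      nlinarith [hLam, hdB]
    -- initial conditions
    have hp0 : p 0 = 0 := by
      rw [hpdef]
      simp only [hA0]
      have := det_c A₀
      rw [hdet] at this
      linarith
    have hq0 : q 0 = 0 := by
      rw [hqdef]
      simp only [hA0, hB0]
      have := mip_c B₀ (cofm A₀)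
      rw [htan, c1_cof, c2_cof] at this
      have h1 := conj_mul_re_symm (c1 B₀) (c1 A₀)
      have h2 : ((starRingEnd ℂ) (c2 B₀) * -c2 A₀).re
          = -((starRingEnd ℂ) (c2 B₀) * c2 A₀).re := by
        rw [mul_neg, Complex.neg_re]
      rw [h1, h2] at this
      have h3 := conj_mul_re_symm (c2 B₀) (c2 A₀)
      linarith [this, h3, conj_mul_re_symm (c1 A₀) (c1 B₀)]
    -- clopen
    have hqc : Continuous q := by
      rw [hqdef]
      apply Continuous.sub
      · exact Complex.continuous_re.comp ((Complex.continuous_conj.comp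
          (continuous_c1.comp hdiffA.continuous)).mul (continuous_c1.comp hcont1))
      · exact Complex.continuous_re.comp ((Complex.continuous_conj.comp
          (continuous_c2.comp hdiffA.continuous)).mul (continuous_c2.comp hcont1))
    have hpc : Continuous p := by
      have : Differentiable ℝ p := fun t => (hdp t).differentiableAt
      exact this.continuous
    have hρc : Continuous (fun t => Complex.normSq (c1 (A t)) + Complex.normSq (c2 (A t))) :=
      (Complex.continuous_normSq.comp (continuous_c1.comp hdiffA.continuous)).add
        (Complex.continuous_normSq.comp (continuous_c2.comp hdiffA.continuous))
    have hclopen : IsClopen {t | p t = 0 ∧ q t = 0} := by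
      constructor
      · exact (isClosed_eq hpc continuous_const).inter (isClosed_eq hqc continuous_const)
      · rw [Metric.isOpen_iff]
        intro t₀ ht₀
        have hpos0 : 0 < Complex.normSq (c1 (A t₀)) + Complex.normSq (c2 (A t₀)) := by
          have h1 : Complex.normSq (c1 (A t₀)) - Complex.normSq (c2 (A t₀)) - 1 = 0 := ht₀.1
          nlinarith [Complex.normSq_nonneg (c2 (A t₀))]
        have hU : IsOpen {t | 0 < Complex.normSq (c1 (A t)) + Complex.normSq (c2 (A t))} :=
          isOpen_lt continuous_const hρc
        obtain ⟨δ, hδ, hball⟩ := Metric.isOpen_iff.mp hU t₀ hpos0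
        refine ⟨δ/2, by linarith, ?_⟩
        intro s hs
        have hsub : Set.Icc (t₀ - δ/2) (t₀ + δ/2) ⊆
            {t | 0 < Complex.normSq (c1 (A t)) + Complex.normSq (c2 (A t))} := by
          intro u hu
          apply hball
          rw [Metric.mem_ball, Real.dist_eq]
          rw [Set.mem_Icc] at hu
          rw [abs_sub_lt_iff]
          constructor <;> linarith
        have hkey := pair_ode_zero (K := 2 + κ)
          (t₀ := t₀) (a := t₀ - δ/2) (b := t₀ + δ/2)
          ⟨by linarith, by linarith⟩
          (fun u _ => hdp u)
          (fun u hu => hdq u (hsub hu))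
          (fun u _ => by
            have h1 : |q u| ≤ max |p u| |q u| := le_max_right _ _
            rw [abs_mul]
            have : |(2:ℝ)| = 2 := by norm_num
            rw [this]
            nlinarith [le_max_left |p u| |q u|, abs_nonneg (p u), abs_nonneg (q u)])
          (fun u _ => by
            have h1 : |p u| ≤ max |p u| |q u| := le_max_left _ _
            rw [abs_mul, abs_neg, abs_of_nonneg hκ]
            nlinarith [le_max_right |p u| |q u|, abs_nonneg (p u), abs_nonneg (q u)])
          ht₀.1 ht₀.2
        have hsmem : s ∈ Set.Icc (t₀ - δ/2) (t₀ + δ/2) := by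
          rw [Metric.mem_ball, Real.dist_eq, abs_sub_lt_iff] at hs
          constructor <;> linarith [hs.1, hs.2]
        exact hkey s hsmem
    have huniv : {t | p t = 0 ∧ q t = 0} = Set.univ := by
      rcases isClopen_iff.mp hclopen with h | h
      · exfalso
        have : (0:ℝ) ∈ {t | p t = 0 ∧ q t = 0} := ⟨hp0, hq0⟩
        rw [h] at this
        exact this
      · exact h
    intro t
    have ht : t ∈ {t | p t = 0 ∧ q t = 0} := by rw [huniv]; trivial
    have h1 := ht.1
    have h2 := ht.2
    simp only [hpdef] at h1
    simp only [hqdef] at h2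
    exact ⟨by linarith, h2⟩
  have hdet1 : ∀ t, Complex.normSq (c1 (A t)) - Complex.normSq (c2 (A t)) = 1 :=
    fun t => (hmain t).1
  have hg0 : ∀ t, ((starRingEnd ℂ) (c1 (A t)) * c1 (deriv A t)).re
      = ((starRingEnd ℂ) (c2 (A t)) * c2 (deriv A t)).re := by
    intro t; have := (hmain t).2; linarith
  have hρ1 : ∀ t, (1:ℝ) ≤ Complex.normSq (c1 (A t)) + Complex.normSq (c2 (A t)) := by
    intro t
    nlinarith [hdet1 t, Complex.normSq_nonneg (c2 (A t))]
  have hρpos : ∀ t, (0:ℝ) < Complex.normSq (c1 (A t)) + Complex.normSq (c2 (A t)) :=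
    fun t => lt_of_lt_of_le one_pos (hρ1 t)
  have hn1pos : ∀ t, (0:ℝ) < Complex.normSq (c1 (A t)) := by
    intro t
    nlinarith [hdet1 t, Complex.normSq_nonneg (c2 (A t))]
  have hz1ne : ∀ t, c1 (A t) ≠ 0 := by
    intro t h
    have := hn1pos t
    rw [h] at this
    simp at this
  -- periodicity of ρ
  have hmipnn : ∀ t, 0 ≤ mip (A t) (A t) := by
    intro t
    rw [mip_self_c]
    nlinarith [Complex.normSq_nonneg (c1 (A t)), Complex.normSq_nonneg (c2 (A t))]
  have hmipper : ∀ t, mip (A (t + T)) (A (t + T)) = mip (A t) (A t) := by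
    intro t
    have h1 : fnorm (A (t + T)) = fnorm (A t) := hper t
    have h2 := congrArg (fun x => x ^ 2) h1
    simp only [fnorm] at h2
    rwa [Real.sq_sqrt (hmipnn (t + T)), Real.sq_sqrt (hmipnn t)] at h2
  have hρper : ∀ t, Complex.normSq (c1 (A (t + T))) + Complex.normSq (c2 (A (t + T)))
      = Complex.normSq (c1 (A t)) + Complex.normSq (c2 (A t)) := by
    intro t
    have := hmipper t
    rw [mip_self_c, mip_self_c] at this
    linarith
  have hn1per : ∀ t, Complex.normSq (c1 (A (t + T))) = Complex.normSq (c1 (A t)) := by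
    intro t
    have h1 := hρper t
    have h2 := hdet1 (t + T)
    have h3 := hdet1 t
    linarith
  have hn2per : ∀ t, Complex.normSq (c2 (A (t + T))) = Complex.normSq (c2 (A t)) := by
    intro t
    have h1 := hρper t
    have h2 := hdet1 (t + T)
    have h3 := hdet1 t
    linarith
  -- angular momenta are conserved
  have hL1const : ∀ t, ((starRingEnd ℂ) (c1 (A t)) * c1 (deriv A t)).im
      = ((starRingEnd ℂ) (c1 A₀) * c1 B₀).im := by
    have hder : ∀ t, HasDerivAt (fun s => ((starRingEnd ℂ) (c1 (A s)) * c1 (deriv A s)).im) 0 t := by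
      intro t
      have h1 := hasDerivAt_im (hasDerivAt_conj_mul (hdz1 t) (hdw1 t))
      convert h1 using 1
      rw [hode1 t]
      have e1 : (starRingEnd ℂ) (c1 (deriv A t)) * c1 (deriv A t)
          = (Complex.normSq (c1 (deriv A t)) : ℂ) := by rw [mul_comm, Complex.mul_conj]
      have e3 : (starRingEnd ℂ) (c1 (A t)) * c1 (A t)
          = (Complex.normSq (c1 (A t)) : ℂ) := by rw [mul_comm, Complex.mul_conj]
      have f3 : (starRingEnd ℂ) (c1 (A t))
            * (((Lam κ (A t) (deriv A t) : ℂ) - (κ : ℂ)) * c1 (A t))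
          = ((Lam κ (A t) (deriv A t) : ℂ) - (κ : ℂ)) * (Complex.normSq (c1 (A t)) : ℂ) := by
        rw [← e3]; ring
      rw [Complex.add_im, e1, f3]
      push_cast
      simp [Complex.mul_im]
    have hdiff : Differentiable ℝ
        (fun s => ((starRingEnd ℂ) (c1 (A s)) * c1 (deriv A s)).im) :=
      fun t => (hder t).differentiableAt
    intro t
    have := is_const_of_deriv_eq_zero hdiff (fun t => (hder t).deriv) t 0
    simp only [hA0, hB0] at this
    exact this
  have hL2const : ∀ t, ((starRingEnd ℂ) (c2 (A t)) * c2 (deriv A t)).im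
      = ((starRingEnd ℂ) (c2 A₀) * c2 B₀).im := by
    have hder : ∀ t, HasDerivAt (fun s => ((starRingEnd ℂ) (c2 (A s)) * c2 (deriv A s)).im) 0 t := by
      intro t
      have h1 := hasDerivAt_im (hasDerivAt_conj_mul (hdz2 t) (hdw2 t))
      convert h1 using 1
      rw [hode2 t]
      have e2 : (starRingEnd ℂ) (c2 (deriv A t)) * c2 (deriv A t)
          = (Complex.normSq (c2 (deriv A t)) : ℂ) := by rw [mul_comm, Complex.mul_conj]
      have e4 : (starRingEnd ℂ) (c2 (A t)) * c2 (A t)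
          = (Complex.normSq (c2 (A t)) : ℂ) := by rw [mul_comm, Complex.mul_conj]
      have f4 : (starRingEnd ℂ) (c2 (A t))
            * (-((Lam κ (A t) (deriv A t) : ℂ) + (κ : ℂ)) * c2 (A t))
          = -((Lam κ (A t) (deriv A t) : ℂ) + (κ : ℂ)) * (Complex.normSq (c2 (A t)) : ℂ) := by
        rw [← e4]; ring
      rw [Complex.add_im, e2, f4]
      push_cast
      simp [Complex.mul_im]
    have hdiff : Differentiable ℝ
        (fun s => ((starRingEnd ℂ) (c2 (A s)) * c2 (deriv A s)).im) :=
      fun t => (hder t).differentiableAt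
    intro t
    have := is_const_of_deriv_eq_zero hdiff (fun t => (hder t).deriv) t 0
    simp only [hA0, hB0] at this
    exact this
  -- structure of the Lagrange multiplier
  have hΛ_eq : ∀ t, Lam κ (A t) (deriv A t)
      * (Complex.normSq (c1 (A t)) + Complex.normSq (c2 (A t)))
      = κ - (deriv A t).det := by
    intro t
    rw [Lam, mip_self_c]
    have := hρpos t
    field_simp
  have hconst : ∀ t, (κ - (deriv A t).det)
      * (Complex.normSq (c1 (A t)) + Complex.normSq (c2 (A t)))
      = (κ - B₀.det) * (Complex.normSq (c1 A₀) + Complex.normSq (c2 A₀)) := by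
    have hd_dB : ∀ t, HasDerivAt (fun s => κ - (deriv A s).det)
        (-(Lam κ (A t) (deriv A t) * (2 * ((starRingEnd ℂ) (c1 (A t)) * c1 (deriv A t)).re
          + 2 * ((starRingEnd ℂ) (c2 (A t)) * c2 (deriv A t)).re))) t := by
      intro t
      have hfun : (fun s => κ - (deriv A s).det)
          = fun s => κ - (Complex.normSq (c1 (deriv A s)) - Complex.normSq (c2 (deriv A s))) := by
        funext s; rw [det_c]
      rw [hfun]
      have h1 := ((hasDerivAt_normSq (hdw1 t)).sub (hasDerivAt_normSq (hdw2 t))).const_sub κ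
      refine h1.congr_deriv (Eq.symm ?_)
      rw [hode1 t, hode2 t]
      have g1 : ((starRingEnd ℂ) (c1 (deriv A t))
          * (((Lam κ (A t) (deriv A t) : ℂ) - (κ : ℂ)) * c1 (A t))).re
          = (Lam κ (A t) (deriv A t) - κ) * ((starRingEnd ℂ) (c1 (A t)) * c1 (deriv A t)).re := by
        simp only [Complex.mul_re, Complex.mul_im, Complex.sub_re, Complex.sub_im,
          Complex.ofReal_re, Complex.ofReal_im, Complex.conj_re, Complex.conj_im]
        ring
      have g2 : ((starRingEnd ℂ) (c2 (deriv A t))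
          * (-((Lam κ (A t) (deriv A t) : ℂ) + (κ : ℂ)) * c2 (A t))).re
          = -(Lam κ (A t) (deriv A t) + κ) * ((starRingEnd ℂ) (c2 (A t)) * c2 (deriv A t)).re := by
        simp only [Complex.mul_re, Complex.mul_im, Complex.add_re, Complex.add_im,
          Complex.neg_re, Complex.neg_im, Complex.ofReal_re, Complex.ofReal_im,
          Complex.conj_re, Complex.conj_im]
        ring
      rw [g1, g2]
      linear_combination (-2*κ) * hg0 t
    have hdρ : ∀ t, HasDerivAt
        (fun s => Complex.normSq (c1 (A s)) + Complex.normSq (c2 (A s)))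
        (2 * ((starRingEnd ℂ) (c1 (A t)) * c1 (deriv A t)).re
          + 2 * ((starRingEnd ℂ) (c2 (A t)) * c2 (deriv A t)).re) t :=
      fun t => (hasDerivAt_normSq (hdz1 t)).add (hasDerivAt_normSq (hdz2 t))
    have hprod : ∀ t, HasDerivAt (fun s => (κ - (deriv A s).det)
        * (Complex.normSq (c1 (A s)) + Complex.normSq (c2 (A s)))) 0 t := by
      intro t
      have h1 := (hd_dB t).mul (hdρ t)
      refine h1.congr_deriv (Eq.symm ?_)
      linear_combination (2 * ((starRingEnd ℂ) (c1 (A t)) * c1 (deriv A t)).re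
        + 2 * ((starRingEnd ℂ) (c2 (A t)) * c2 (deriv A t)).re) * hΛ_eq t
    have hdiff : Differentiable ℝ (fun s => (κ - (deriv A s).det)
        * (Complex.normSq (c1 (A s)) + Complex.normSq (c2 (A s)))) :=
      fun t => (hprod t).differentiableAt
    intro t
    have := is_const_of_deriv_eq_zero hdiff (fun t => (hprod t).deriv) t 0
    simp only [hA0, hB0] at this
    exact this
  have hΛ_per : ∀ t, Lam κ (A (t + T)) (deriv A (t + T)) = Lam κ (A t) (deriv A t) := by
    intro t
    have h1 := hΛ_eq (t + T)
    have h2 := hΛ_eq t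
    have h3 := hconst (t + T)
    have h4 := hconst t
    have h5 := hρper t
    have h6 := hρpos t
    rw [h5] at h1 h3
    have key : Lam κ (A (t + T)) (deriv A (t + T))
        * ((Complex.normSq (c1 (A t)) + Complex.normSq (c2 (A t)))
          * (Complex.normSq (c1 (A t)) + Complex.normSq (c2 (A t))))
        = Lam κ (A t) (deriv A t)
        * ((Complex.normSq (c1 (A t)) + Complex.normSq (c2 (A t)))
          * (Complex.normSq (c1 (A t)) + Complex.normSq (c2 (A t)))) := by
      linear_combination (Complex.normSq (c1 (A t)) + Complex.normSq (c2 (A t))) * h1 + h3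
        - (Complex.normSq (c1 (A t)) + Complex.normSq (c2 (A t))) * h2 - h4
    exact mul_right_cancel₀ (by positivity) key
  have hΛ_bd : ∀ t, |Lam κ (A t) (deriv A t)|
      ≤ |(κ - B₀.det) * (Complex.normSq (c1 A₀) + Complex.normSq (c2 A₀))| := by
    intro t
    have h1 := hΛ_eq t
    have h3 := hconst t
    have h6 := hρ1 t
    have key : Lam κ (A t) (deriv A t)
        * ((Complex.normSq (c1 (A t)) + Complex.normSq (c2 (A t)))
          * (Complex.normSq (c1 (A t)) + Complex.normSq (c2 (A t))))
        = (κ - B₀.det) * (Complex.normSq (c1 A₀) + Complex.normSq (c2 A₀)) := by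
      linear_combination (Complex.normSq (c1 (A t)) + Complex.normSq (c2 (A t))) * h1 + h3
    rw [← key, abs_mul]
    have h7 : (1:ℝ) ≤ |(Complex.normSq (c1 (A t)) + Complex.normSq (c2 (A t)))
        * (Complex.normSq (c1 (A t)) + Complex.normSq (c2 (A t)))| := by
      rw [abs_of_pos (by positivity)]
      nlinarith
    nlinarith [abs_nonneg (Lam κ (A t) (deriv A t))]
  -- rotation of z1
  have hz1rot : ∀ t, c1 (A (t + T))
      = Complex.exp ((ω₁ * T : ℝ) * Complex.I) * c1 (A t) := by
    have hps := phase_shift (z := fun s => c1 (A s)) (z' := fun s => c1 (deriv A s))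
      (L := ((starRingEnd ℂ) (c1 A₀) * c1 B₀).im) hT hdz1
      (continuous_c1.comp hcont1) hz1ne (fun t => hn1per t) hL1const
    have hint_eq : (∫ s in (0:ℝ)..T,
        ((starRingEnd ℂ) (c1 A₀) * c1 B₀).im / Complex.normSq (c1 (A s))) = ω₁ * T := by
      have hcongr : ∀ s, X3 A₀ B₀ / ((1/2) * mip (A s) (A s) + 1)
          = ((starRingEnd ℂ) (c1 A₀) * c1 B₀).im / Complex.normSq (c1 (A s)) := by
        intro s
        rw [X3_c]
        have hden : (1/2) * mip (A s) (A s) + 1 = 2 * Complex.normSq (c1 (A s)) := by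
          rw [mip_self_c]
          have := hdet1 s
          linarith
        rw [hden, mul_div_mul_left _ _ (two_ne_zero)]
      have h2 : (∫ t in (0:ℝ)..T, X3 A₀ B₀ / ((1/2) * mip (A t) (A t) + 1))
          = ∫ s in (0:ℝ)..T,
            ((starRingEnd ℂ) (c1 A₀) * c1 B₀).im / Complex.normSq (c1 (A s)) := by
        apply intervalIntegral.integral_congr
        intro s _
        simpa using hcongr s
      rw [← h2, hω₁]
      field_simp
    intro t
    have h := hps t
    rw [hint_eq] at h
    exact h
  -- rotation / periodicity of z2
  have hz2key : (∀ t, c2 (A (t + 2*T))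
        = Complex.exp ((ω₂ * (2*T) : ℝ) * Complex.I) * c2 (A t)) ∧
      ((∀ t, c2 (A t) ≠ 0) → ∀ t, c2 (A (t + T))
        = Complex.exp ((ω₂ * T : ℝ) * Complex.I) * c2 (A t)) := by
    by_cases hX2 : X2 A₀ B₀ = 0
    · -- degenerate case: the second component lives on a real line
      have hω2 : ω₂ = 0 := hω₂0 hX2
      have hL2zero : ∀ t, ((starRingEnd ℂ) (c2 (A t)) * c2 (deriv A t)).im = 0 := by
        intro t
        rw [hL2const t]
        rw [X2_c] at hX2
        linarith
      by_cases hz20 : ∀ t, c2 (A t) = 0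
      · constructor
        · intro t; rw [hz20, hz20, mul_zero]
        · intro hnz
          exact absurd (hz20 0) (hnz 0)
      · push_neg at hz20
        obtain ⟨t₁, ht₁⟩ := hz20
        set ζ : ℂ := c2 (A t₁) with hζdef
        have hnζ : 0 < Complex.normSq ζ := Complex.normSq_pos.2 ht₁
        set Kc : ℝ := |(κ - B₀.det) * (Complex.normSq (c1 A₀) + Complex.normSq (c2 A₀))| + κ
          with hKc
        have hbd : ∀ t, |(-(Lam κ (A t) (deriv A t) + κ))| ≤ Kc := by
          intro t
          rw [abs_neg]
          have := hΛ_bd t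
          have := abs_add_le (Lam κ (A t) (deriv A t)) κ
          rw [abs_of_nonneg hκ] at this
          rw [hKc]
          linarith
        -- step 1: the imaginary part of conj ζ * z2 vanishes identically
        have hIm0 : ∀ t, ((starRingEnd ℂ) ζ * c2 (A t)).im = 0 := by
          apply second_order_zero (u' := fun t => ((starRingEnd ℂ) ζ * c2 (deriv A t)).im)
            (c := fun t => -(Lam κ (A t) (deriv A t) + κ)) (K := Kc) hbd
          · intro t
            exact hasDerivAt_im ((hdz2 t).const_mul ((starRingEnd ℂ) ζ))
          · intro t
            have h1 := hasDerivAt_im ((hdw2 t).const_mul ((starRingEnd ℂ) ζ))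
            convert h1 using 1
            rw [hode2 t]
            simp only [Complex.mul_im, Complex.neg_re, Complex.neg_im, Complex.add_re,
              Complex.add_im, Complex.ofReal_re, Complex.ofReal_im, Complex.mul_re]
            ring
          · rw [hζdef, mul_comm, Complex.mul_conj, Complex.ofReal_im]
          · exact hL2zero t₁
        -- also the imaginary part of conj ζ * w2 vanishes
        have hIm0' : ∀ t, ((starRingEnd ℂ) ζ * c2 (deriv A t)).im = 0 := by
          intro t
          have h1 := hasDerivAt_im ((hdz2 t).const_mul ((starRingEnd ℂ) ζ))
          have h2 : HasDerivAt (fun s => ((starRingEnd ℂ) ζ * c2 (A s)).im) 0 t := by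
            have : (fun s => ((starRingEnd ℂ) ζ * c2 (A s)).im) = fun _ => 0 :=
              funext hIm0
            rw [this]
            exact hasDerivAt_const t 0
          exact (h1.unique h2)
        -- the real representation
        set Y : ℝ → ℝ := fun t => ((starRingEnd ℂ) ζ * c2 (A t)).re with hYdef
        set Yd : ℝ → ℝ := fun t => ((starRingEnd ℂ) ζ * c2 (deriv A t)).re with hYddef
        have hrep : ∀ t, (Complex.normSq ζ : ℂ) * c2 (A t) = (Y t : ℝ) * ζ := by
          intro t
          have h1 : (starRingEnd ℂ) ζ * c2 (A t) = ((Y t : ℝ) : ℂ) :=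
            Complex.ext rfl (by rw [hIm0 t]; simp)
          have h2 := congrArg (fun x => ζ * x) h1
          rw [← mul_assoc, Complex.mul_conj] at h2
          rw [h2]; ring
        have hY2 : ∀ t, Y t ^ 2 = Complex.normSq ζ * Complex.normSq (c2 (A t)) := by
          intro t
          have h1 := congrArg Complex.normSq (hrep t)
          rw [Complex.normSq_mul, Complex.normSq_mul, Complex.normSq_ofReal,
            Complex.normSq_ofReal] at h1
          refine mul_left_cancel₀ (ne_of_gt hnζ) ?_
          linear_combination -h1
        -- derivatives of Y
        have hdY : ∀ t, HasDerivAt Y (Yd t) t := by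
          intro t
          exact hasDerivAt_re ((hdz2 t).const_mul ((starRingEnd ℂ) ζ))
        have hdYd : ∀ t, HasDerivAt Yd (-(Lam κ (A t) (deriv A t) + κ) * Y t) t := by
          intro t
          have h1 := hasDerivAt_re ((hdw2 t).const_mul ((starRingEnd ℂ) ζ))
          convert h1 using 1
          rw [hode2 t, hYdef]
          simp only [Complex.mul_re, Complex.mul_im, Complex.neg_re, Complex.neg_im,
            Complex.add_re, Complex.add_im, Complex.ofReal_re, Complex.ofReal_im]
          ring
        -- Y at t₁
        have hYt₁ : Y t₁ = Complex.normSq ζ := by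
          rw [hYdef]
          simp only [hζdef]
          rw [mul_comm, Complex.mul_conj, Complex.ofReal_re]
        -- σ
        set σ : ℝ := Y (t₁ + T) / Complex.normSq ζ with hσdef
        have hYsq : ∀ t, Y (t + T) ^ 2 = Y t ^ 2 := by
          intro t
          rw [hY2, hY2, hn2per t]
        have hσY : Y (t₁ + T) = σ * Complex.normSq ζ := by
          rw [hσdef, div_mul_cancel₀ _ (ne_of_gt hnζ)]
        have hσsq : σ ^ 2 = 1 := by
          have h1 := hYsq t₁
          rw [hYt₁, hσY] at h1
          have h2 : σ ^ 2 * (Complex.normSq ζ * Complex.normSq ζ)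
              = 1 * (Complex.normSq ζ * Complex.normSq ζ) := by linear_combination h1
          exact mul_right_cancel₀ (by positivity) h2
        -- derivative matching at t₁
        have hYdT : Yd (t₁ + T) = σ * Yd t₁ := by
          have hq0 : ∀ t, HasDerivAt (fun s => Y (s + T) ^ 2 - Y s ^ 2)
              (2 * Y (t + T) * Yd (t + T) - 2 * Y t * Yd t) t := by
            intro t
            have h1 : HasDerivAt (fun s => Y (s + T)) (Yd (t + T)) t :=
              HasDerivAt.comp_add_const t T (hdY (t + T))
            have h2 := ((h1.pow 2).sub ((hdY t).pow 2))
            refine h2.congr_deriv (Eq.symm ?_)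
            ring
          have hzero : (fun s => Y (s + T) ^ 2 - Y s ^ 2) = fun _ => 0 := by
            funext s
            rw [hYsq s]; ring
          have h3 : HasDerivAt (fun s => Y (s + T) ^ 2 - Y s ^ 2) 0 t₁ := by
            rw [hzero]; exact hasDerivAt_const t₁ 0
          have h4 := (hq0 t₁).unique h3
          rw [hσY, hYt₁] at h4
          have h5 : σ * (Complex.normSq ζ * (Yd (t₁ + T) - σ * Yd t₁)) = 0 := by
            linear_combination (1/2) * h4 - Complex.normSq ζ * Yd t₁ * hσsq
          rcases mul_eq_zero.mp h5 with h6 | h6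
          · exfalso
            have : σ ^ 2 = 0 := by rw [h6]; ring
            rw [hσsq] at this
            norm_num at this
          · rcases mul_eq_zero.mp h6 with h7 | h7
            · exact absurd h7 (ne_of_gt hnζ)
            · linarith
        -- θ ≡ 0
        have hθ : ∀ t, Y (t + T) = σ * Y t := by
          have key := second_order_zero (u := fun t => Y (t + T) - σ * Y t)
            (u' := fun t => Yd (t + T) - σ * Yd t)
            (c := fun t => -(Lam κ (A t) (deriv A t) + κ)) (K := Kc) hbd
            (t₀ := t₁) ?_ ?_ ?_ ?_
          · intro t
            have h := key t
            linarith
          · intro t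
            exact (HasDerivAt.comp_add_const t T (hdY (t + T))).sub ((hdY t).const_mul σ)
          · intro t
            have h1 : HasDerivAt (fun s => Yd (s + T))
                (-(Lam κ (A (t + T)) (deriv A (t + T)) + κ) * Y (t + T)) t :=
              HasDerivAt.comp_add_const t T (hdYd (t + T))
            rw [hΛ_per t] at h1
            have h2 := h1.sub ((hdYd t).const_mul σ)
            refine h2.congr_deriv (Eq.symm ?_)
            ring
          · show Y (t₁ + T) - σ * Y t₁ = 0
            rw [hσY, hYt₁]; ring
          · show Yd (t₁ + T) - σ * Yd t₁ = 0
            rw [hYdT]; ring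
        -- z2 shift
        have hz2σ : ∀ t, c2 (A (t + T)) = (σ : ℝ) * c2 (A t) := by
          intro t
          have h1 := hrep (t + T)
          rw [hθ t] at h1
          have h2 := hrep t
          have h3 : (Complex.normSq ζ : ℂ) * c2 (A (t + T))
              = (Complex.normSq ζ : ℂ) * ((σ : ℝ) * c2 (A t)) := by
            rw [h1]
            push_cast
            rw [show ((σ:ℂ) * (Y t:ℂ)) * ζ = (σ:ℂ) * ((Y t:ℂ) * ζ) from by ring, ← h2]
            ring
          exact mul_left_cancel₀ (by exact_mod_cast ne_of_gt hnζ) h3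
        constructor
        · intro t
          have h1 := hz2σ (t + T)
          have h2 := hz2σ t
          rw [show t + 2*T = t + T + T from by ring, h1, h2, hω2]
          rw [← mul_assoc, show ((σ:ℂ)) * (σ:ℂ) = ((σ^2 : ℝ) : ℂ) from by push_cast; ring,
            hσsq]
          norm_num
        · intro hnz t
          have hYne : ∀ t, Y t ≠ 0 := by
            intro t h
            have h1 := hY2 t
            rw [h] at h1
            have h2 := Complex.normSq_pos.2 (hnz t)
            nlinarith
          have hσone : σ = 1 := by
            have h1 : (σ - 1) * (σ + 1) = 0 := by nlinarith [hσsq]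
            rcases mul_eq_zero.mp h1 with h2 | h2
            · linarith
            · exfalso
              have hσm : σ = -1 := by linarith
              have hcY : Continuous Y := by
                have : Differentiable ℝ Y := fun t => (hdY t).differentiableAt
                exact this.continuous
              have hpos : 0 < Y t₁ := by rw [hYt₁]; exact hnζ
              have hneg : Y (t₁ + T) < 0 := by
                rw [hσY, hσm]; nlinarith [hnζ]
              have hmem : (0:ℝ) ∈ Set.Icc (Y (t₁ + T)) (Y t₁) :=
                ⟨le_of_lt hneg, le_of_lt hpos⟩
              obtain ⟨s, -, hs⟩ := intermediate_value_Icc'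
                (by linarith [hT] : t₁ ≤ t₁ + T) hcY.continuousOn hmem
              exact hYne s hs
          rw [hz2σ t, hσone, hω2]
          norm_num
    · -- nondegenerate case : phase shift for z2 as well
      have hω2 := hω₂1 hX2
      have hL2ne : ((starRingEnd ℂ) (c2 A₀) * c2 B₀).im ≠ 0 := by
        rw [X2_c] at hX2
        intro h
        rw [h] at hX2
        norm_num at hX2
      have hz2ne : ∀ t, c2 (A t) ≠ 0 := by
        intro t h
        have hcc := hL2const t
        rw [h] at hcc
        apply hL2ne
        rw [← hcc]
        simp
      have hn2pos : ∀ t, 0 < Complex.normSq (c2 (A t)) :=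
        fun t => Complex.normSq_pos.2 (hz2ne t)
      have hps := phase_shift (z := fun s => c2 (A s)) (z' := fun s => c2 (deriv A s))
        (L := ((starRingEnd ℂ) (c2 A₀) * c2 B₀).im) hT hdz2
        (continuous_c2.comp hcont1) hz2ne (fun t => hn2per t) hL2const
      have hint_eq : (∫ s in (0:ℝ)..T,
          ((starRingEnd ℂ) (c2 A₀) * c2 B₀).im / Complex.normSq (c2 (A s))) = ω₂ * T := by
        have hcongr : ∀ s, X2 A₀ B₀ / ((1/2) * mip (A s) (A s) - 1)
            = ((starRingEnd ℂ) (c2 A₀) * c2 B₀).im / Complex.normSq (c2 (A s)) := by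
          intro s
          rw [X2_c]
          have hden : (1/2) * mip (A s) (A s) - 1 = 2 * Complex.normSq (c2 (A s)) := by
            rw [mip_self_c]
            have := hdet1 s
            linarith
          rw [hden, mul_div_mul_left _ _ (two_ne_zero)]
        have h2 : (∫ t in (0:ℝ)..T, X2 A₀ B₀ / ((1/2) * mip (A t) (A t) - 1))
            = ∫ s in (0:ℝ)..T,
              ((starRingEnd ℂ) (c2 A₀) * c2 B₀).im / Complex.normSq (c2 (A s)) := by
          apply intervalIntegral.integral_congr
          intro s _
          simpa using hcongr s
        rw [← h2, hω2]
        field_simp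
      have hz2rot : ∀ t, c2 (A (t + T))
          = Complex.exp ((ω₂ * T : ℝ) * Complex.I) * c2 (A t) := by
        intro t
        have h := hps t
        rw [hint_eq] at h
        exact h
      constructor
      · intro t
        rw [show t + 2*T = t + T + T from by ring, hz2rot, hz2rot, ← mul_assoc,
          ← Complex.exp_add]
        congr 2
        push_cast
        ring
      · intro _
        exact hz2rot
  obtain ⟨H2T, HT⟩ := hz2key
  -- conjugation formulas
  have hc1UM : ∀ (a b : ℝ) (M : M2),
      c1 (Um a * M * Um b) = Complex.exp ((a + b : ℝ) * Complex.I) * c1 M := by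
    intro a b M
    rw [c1_mul_Um, c1_Um_mul, ← mul_assoc, ← Complex.exp_add]
    congr 2
    push_cast
    ring
  have hc2UM : ∀ (a b : ℝ) (M : M2),
      c2 (Um a * M * Um b) = Complex.exp ((a - b : ℝ) * Complex.I) * c2 M := by
    intro a b M
    rw [c2_mul_Um, c2_Um_mul, ← mul_assoc, ← Complex.exp_add]
    congr 2
    push_cast
    ring
  have hassoc : ∀ (P Q R S X : M2), P * (Q * X * R) * S = (P * Q) * X * (R * S) := by
    intros P Q R S X
    noncomm_ring
  -- the 2T-shift at the matrix level
  have hstep2T : ∀ t, A (t + 2*T) = Um ((ω₁ + ω₂) * T) * A t * Um ((ω₁ - ω₂) * T) := by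
    intro t
    apply ext_c
    · rw [hc1UM]
      rw [show t + 2*T = t + T + T from by ring, hz1rot (t + T), hz1rot t, ← mul_assoc,
        ← Complex.exp_add]
      congr 2
      push_cast
      ring
    · rw [hc2UM, H2T t]
      congr 2
      push_cast
      ring
  refine ⟨fun t => Um (-((ω₁ + ω₂) * t / 2)) * A t * Um (-((ω₁ - ω₂) * t / 2)), ?_, ?_, ?_⟩
  · -- 2T-periodicity
    intro t
    show Um (-((ω₁ + ω₂) * (t + 2*T) / 2)) * A (t + 2*T) * Um (-((ω₁ - ω₂) * (t + 2*T) / 2))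
        = Um (-((ω₁ + ω₂) * t / 2)) * A t * Um (-((ω₁ - ω₂) * t / 2))
    rw [hstep2T t, hassoc, Um_mul_Um, Um_mul_Um,
      show -((ω₁ + ω₂) * (t + 2*T) / 2) + (ω₁ + ω₂) * T = -((ω₁ + ω₂) * t / 2) from by ring,
      show (ω₁ - ω₂) * T + -((ω₁ - ω₂) * (t + 2*T) / 2) = -((ω₁ - ω₂) * t / 2) from by ring]
  · -- the representation
    intro t
    rw [hassoc, Um_mul_Um, Um_mul_Um,
      show (ω₁ + ω₂) * t / 2 + -((ω₁ + ω₂) * t / 2) = 0 from by ring,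
      show -((ω₁ - ω₂) * t / 2) + (ω₁ - ω₂) * t / 2 = 0 from by ring,
      Um_zero, one_mul, mul_one]
  · -- T-periodicity away from SO(2)
    intro hSO
    have hnz2 : ∀ t, c2 (A t) ≠ 0 := by
      intro t h
      apply hSO t
      apply isSO_of_c2_zero _ h
      rw [det_c]
      exact hdet1 t
    have hstepT : ∀ t, A (t + T) = Um ((ω₁ + ω₂) * T / 2) * A t * Um ((ω₁ - ω₂) * T / 2) := by
      intro t
      apply ext_c
      · rw [hc1UM, hz1rot t]
        congr 2
        push_cast
        ring
      · rw [hc2UM, HT hnz2 t]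
        congr 2
        push_cast
        ring
    intro t
    show Um (-((ω₁ + ω₂) * (t + T) / 2)) * A (t + T) * Um (-((ω₁ - ω₂) * (t + T) / 2))
        = Um (-((ω₁ + ω₂) * t / 2)) * A t * Um (-((ω₁ - ω₂) * t / 2))
    rw [hstepT t, hassoc, Um_mul_Um, Um_mul_Um,
      show -((ω₁ + ω₂) * (t + T) / 2) + (ω₁ + ω₂) * T / 2 = -((ω₁ + ω₂) * t / 2) from by ring,
      show (ω₁ - ω₂) * T / 2 + -((ω₁ - ω₂) * (t + T) / 2) = -((ω₁ - ω₂) * t / 2) from by ring]
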